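/- Let L ⊆ (Σ_k²)^* be a language such that: (a) no word of L begins with [0,0]; (b) quo_k(L) = { [π₁(x)]_k/[π₂(x)]_k : x ∈ L } is infinite; (c) whenever (p,q)_k ∈ L then p ≥ q ≥ 1; (d) whenever (p,q)_k ∈ L and p > q, also (p−1,q)_k ∈ L. Then every special point of quo_k(L) other than possibly 1 is an accumulation point of the set quo_k(L). -/

import Mathlib

/-- The base-k value of a word of digits, most significant digit first. -/
def baseVal (k : ℕ) (w : List (Fin k)) : ℕ :=
  w.foldl (fun acc d => acc * k + d.val) 0

/-- The quotient of the base-k values of the two coordinates of a word over Σ_k². -/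
noncomputable def quoVal (k : ℕ) (x : List (Fin k × Fin k)) : ℝ :=
  (baseVal k (x.map Prod.fst) : ℝ) / (baseVal k (x.map Prod.snd) : ℝ)

/-- β is a (finite) special point of quo_k(L). -/
def IsSpecialPoint (k : ℕ) (L : Language (Fin k × Fin k)) (β : ℝ) : Prop :=
  ∃ x : ℕ → List (Fin k × Fin k), Function.Injective x ∧ (∀ j, x j ∈ L) ∧
    Filter.Tendsto (fun j => quoVal k (x j)) Filter.atTop (nhds β)

lemma foldl_base (k : ℕ) (a : ℕ) (w : List (Fin k)) :
    w.foldl (fun acc d => acc * k + d.val) a = a * k ^ w.length + baseVal k w := by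
  induction w generalizing a with
  | nil => simp [baseVal]
  | cons d t ih =>
      show t.foldl _ (a * k + d.val) = _
      rw [ih (a * k + d.val)]
      have : baseVal k (d :: t) = (0 * k + d.val) * k ^ t.length + baseVal k t := by
        show t.foldl _ (0 * k + d.val) = _
        rw [ih (0 * k + d.val)]
      rw [this]
      simp [List.length_cons, pow_succ]
      ring

lemma baseVal_cons (k : ℕ) (d : Fin k) (w : List (Fin k)) :
    baseVal k (d :: w) = d.val * k ^ w.length + baseVal k w := by
  show w.foldl _ (0 * k + d.val) = _
  rw [foldl_base]
  ring_nf

lemma baseVal_lt (k : ℕ) (hk : 1 ≤ k) (w : List (Fin k)) :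
    baseVal k w < k ^ w.length := by
  induction w with
  | nil => simpa [baseVal] using Nat.one_le_iff_ne_zero.mp (by positivity)
  | cons d t ih =>
      rw [baseVal_cons, List.length_cons, pow_succ]
      calc d.val * k ^ t.length + baseVal k t
          < d.val * k ^ t.length + k ^ t.length := Nat.add_lt_add_left ih _
        _ = (d.val + 1) * k ^ t.length := by ring
        _ ≤ k * k ^ t.length := Nat.mul_le_mul_right _ d.isLt
        _ = k ^ t.length * k := by ring

lemma baseVal_inj (k : ℕ) (hk : 1 ≤ k) (w v : List (Fin k))
    (hl : w.length = v.length) (hv : baseVal k w = baseVal k v) : w = v := by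
  induction w generalizing v with
  | nil => cases v with
    | nil => rfl
    | cons e s => simp at hl
  | cons d t ih =>
      cases v with
      | nil => simp at hl
      | cons e s =>
          simp only [List.length_cons, Nat.add_right_cancel_iff] at hl
          rw [baseVal_cons, baseVal_cons, hl] at hv
          have hK : 0 < k ^ s.length := by positivity
          have hbt : baseVal k t < k ^ s.length := hl ▸ baseVal_lt k hk t
          have hbs : baseVal k s < k ^ s.length := baseVal_lt k hk s
          have hde : d.val = e.val := by
            have h1 : (d.val * k ^ s.length + baseVal k t) / k ^ s.length = d.val := by
              rw [mul_comm, Nat.mul_add_div hK, Nat.div_eq_of_lt hbt, Nat.add_zero]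
            have h2 : (e.val * k ^ s.length + baseVal k s) / k ^ s.length = e.val := by
              rw [mul_comm, Nat.mul_add_div hK, Nat.div_eq_of_lt hbs, Nat.add_zero]
            rw [← h1, ← h2, hv]
          have hts : baseVal k t = baseVal k s := by
            rw [hde] at hv; exact Nat.add_left_cancel hv
          have : d = e := Fin.ext hde
          rw [this, ih s hl hts]

lemma head_lower (k : ℕ) (d : Fin k) (w : List (Fin k)) (hd : d.val ≠ 0) :
    k ^ w.length ≤ baseVal k (d :: w) := by
  rw [baseVal_cons]
  calc k ^ w.length = 1 * k ^ w.length := (one_mul _).symm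
    _ ≤ d.val * k ^ w.length := Nat.mul_le_mul_right _ (Nat.one_le_iff_ne_zero.mpr hd)
    _ ≤ _ := Nat.le_add_right _ _

lemma lead_lower (k : ℕ) (d : Fin k × Fin k) (t : List (Fin k × Fin k))
    (hd : d.1.val ≠ 0 ∨ d.2.val ≠ 0) :
    k ^ t.length ≤ max (baseVal k ((d :: t).map Prod.fst)) (baseVal k ((d :: t).map Prod.snd)) := by
  rcases hd with h | h
  · refine le_trans ?_ (le_max_left _ _)
    simpa [List.length_map] using head_lower k d.1 (t.map Prod.fst) h
  · refine le_trans ?_ (le_max_right _ _)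
    simpa [List.length_map] using head_lower k d.2 (t.map Prod.snd) h

lemma eq_of_maps {α β : Type*} (x y : List (α × β))
    (h1 : x.map Prod.fst = y.map Prod.fst) (h2 : x.map Prod.snd = y.map Prod.snd) : x = y := by
  induction x generalizing y with
  | nil => cases y with
    | nil => rfl
    | cons e s => simp at h1
  | cons d t ih =>
      cases y with
      | nil => simp at h1
      | cons e s =>
          simp only [List.map_cons, List.cons.injEq] at h1 h2
          have : d = e := Prod.ext h1.1 h2.1
          rw [this, ih s h1.2 h2.2]

lemma pair_word_eq (k : ℕ) (hk : 2 ≤ k) (x y : List (Fin k × Fin k))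
    (hx : ∀ (d : Fin k × Fin k) (t : List (Fin k × Fin k)), x = d :: t → d.1.val ≠ 0 ∨ d.2.val ≠ 0)
    (hy : ∀ (d : Fin k × Fin k) (t : List (Fin k × Fin k)), y = d :: t → d.1.val ≠ 0 ∨ d.2.val ≠ 0)
    (hp : baseVal k (x.map Prod.fst) = baseVal k (y.map Prod.fst))
    (hq : baseVal k (x.map Prod.snd) = baseVal k (y.map Prod.snd)) : x = y := by
  have hk1 : 1 ≤ k := by omega
  -- helper: nonempty word with lead cond cannot have strictly shorter value range
  have key : ∀ (x y : List (Fin k × Fin k)),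
      (∀ (d : Fin k × Fin k) (t : List (Fin k × Fin k)), y = d :: t → d.1.val ≠ 0 ∨ d.2.val ≠ 0) →
      baseVal k (x.map Prod.fst) = baseVal k (y.map Prod.fst) →
      baseVal k (x.map Prod.snd) = baseVal k (y.map Prod.snd) →
      x.length < y.length → False := by
    intro x y hy hp hq hlen
    cases y with
    | nil => simp at hlen
    | cons e s =>
        have h1 : k ^ s.length ≤ max (baseVal k ((e :: s).map Prod.fst)) (baseVal k ((e :: s).map Prod.snd)) :=
          lead_lower k e s (hy e s rfl)
        have h2 : max (baseVal k (x.map Prod.fst)) (baseVal k (x.map Prod.snd)) < k ^ x.length := by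
          apply max_lt
          · simpa [List.length_map] using baseVal_lt k hk1 (x.map Prod.fst)
          · simpa [List.length_map] using baseVal_lt k hk1 (x.map Prod.snd)
        have h3 : k ^ x.length ≤ k ^ s.length :=
          Nat.pow_le_pow_right hk1 (by simp at hlen; omega)
        rw [hp, hq] at h2
        omega
  have hlen : x.length = y.length := by
    rcases Nat.lt_trichotomy x.length y.length with h | h | h
    · exact absurd h (fun h => key x y hy hp hq h)
    · exact h
    · exact absurd h (fun h => key y x hx hp.symm hq.symm h)
  exact eq_of_maps x y
    (baseVal_inj k hk1 _ _ (by simp [hlen]) hp)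
    (baseVal_inj k hk1 _ _ (by simp [hlen]) hq)

theorem special_points_are_accumulation_points (k : ℕ) (hk : 2 ≤ k)
    (L : Language (Fin k × Fin k))
    (hlead : ∀ x ∈ L, ∀ (d : Fin k × Fin k) (y : List (Fin k × Fin k)),
      x = d :: y → d.1.val ≠ 0 ∨ d.2.val ≠ 0)
    (hquoinf : { r : ℝ | ∃ x ∈ L, r = quoVal k x }.Infinite)
    (hge : ∀ x ∈ L, 1 ≤ baseVal k (x.map Prod.snd) ∧
      baseVal k (x.map Prod.snd) ≤ baseVal k (x.map Prod.fst))
    (hdec : ∀ x ∈ L, baseVal k (x.map Prod.snd) < baseVal k (x.map Prod.fst) →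
      ∃ y ∈ L, baseVal k (y.map Prod.fst) = baseVal k (x.map Prod.fst) - 1 ∧
        baseVal k (y.map Prod.snd) = baseVal k (x.map Prod.snd)) :
    ∀ β : ℝ, IsSpecialPoint k L β → β ≠ 1 →
      AccPt β (Filter.principal { r : ℝ | ∃ x ∈ L, r = quoVal k x }) := by
  intro β hβ hβ1
  obtain ⟨x, hinj, hmem, htend⟩ := hβ
  set S : Set ℝ := { r : ℝ | ∃ x ∈ L, r = quoVal k x } with hS
  set q : ℕ → ℕ := fun j => baseVal k ((x j).map Prod.snd) with hqdef
  set p : ℕ → ℕ := fun j => baseVal k ((x j).map Prod.fst) with hpdef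
  have hqpos : ∀ j, (0 : ℝ) < q j := by
    intro j
    have := (hge (x j) (hmem j)).1
    exact_mod_cast Nat.lt_of_lt_of_le Nat.zero_lt_one this
  have hquo1 : ∀ j, 1 ≤ quoVal k (x j) := by
    intro j
    have h2 := (hge (x j) (hmem j)).2
    rw [quoVal, one_le_div (hqpos j)]
    exact_mod_cast h2
  have hβge : 1 ≤ β := ge_of_tendsto' htend hquo1
  have hβgt : 1 < β := lt_of_le_of_ne hβge (Ne.symm hβ1)
  rw [accPt_iff_nhds]
  intro U hU
  obtain ⟨ε, hε, hball⟩ := Metric.mem_nhds_iff.1 hU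
  by_cases hA : ∃ j, quoVal k (x j) ≠ β ∧ dist (quoVal k (x j)) β < ε
  · obtain ⟨j, hne, hd⟩ := hA
    exact ⟨quoVal k (x j), ⟨hball (Metric.mem_ball.2 hd), ⟨x j, hmem j, rfl⟩⟩, hne⟩
  · obtain ⟨N, hN⟩ := (Metric.tendsto_atTop.1 htend) ε hε
    have hconst : ∀ j, N ≤ j → quoVal k (x j) = β := by
      intro j hj
      by_contra hne
      exact hA ⟨j, hne, hN j hj⟩
    -- q is injective on [N, ∞)
    have hqinj : ∀ j1 j2, N ≤ j1 → N ≤ j2 → q j1 = q j2 → j1 = j2 := by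
      intro j1 j2 h1 h2 hq12
      have hp1 : (p j1 : ℝ) = β * q j1 := by
        have := hconst j1 h1
        rw [quoVal, div_eq_iff (ne_of_gt (hqpos j1))] at this
        exact this
      have hp2 : (p j2 : ℝ) = β * q j2 := by
        have := hconst j2 h2
        rw [quoVal, div_eq_iff (ne_of_gt (hqpos j2))] at this
        exact this
      have hpeq : p j1 = p j2 := by
        have : (p j1 : ℝ) = (p j2 : ℝ) := by rw [hp1, hp2, hq12]
        exact_mod_cast this
      have := pair_word_eq k hk (x j1) (x j2)
        (hlead (x j1) (hmem j1)) (hlead (x j2) (hmem j2)) hpeq hq12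
      exact hinj this
    -- find j ≥ N with large denominator
    set M : ℕ := ⌈ε⁻¹⌉₊ + 1 with hM
    have hex : ∃ j, N ≤ j ∧ M ≤ q j := by
      by_contra h
      push_neg at h
      have hio : Set.InjOn q (Set.Ici N) := fun a ha b hb => hqinj a b ha hb
      have hinf : (q '' Set.Ici N).Infinite := (Set.Ici_infinite N).image hio
      exact hinf (Set.Finite.subset (Set.finite_Iio M)
        (by rintro _ ⟨j, hj, rfl⟩; exact h j hj))
    obtain ⟨j, hjN, hjM⟩ := hex
    have hqβ : quoVal k (x j) = β := hconst j hjN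
    have hinv : (q j : ℝ)⁻¹ < ε := by
      have h1 : ε⁻¹ < (q j : ℝ) := by
        calc ε⁻¹ ≤ (⌈ε⁻¹⌉₊ : ℝ) := Nat.le_ceil _
          _ < (M : ℝ) := by exact_mod_cast Nat.lt_succ_self _
          _ ≤ (q j : ℝ) := by exact_mod_cast hjM
      exact (inv_lt_comm₀ hε (hqpos j)).1 h1
    have hpq : q j < p j := by
      have : 1 < quoVal k (x j) := hqβ ▸ hβgt
      rw [quoVal, one_lt_div (hqpos j)] at this
      exact_mod_cast this
    obtain ⟨y, hyL, hyp, hyq⟩ := hdec (x j) (hmem j) hpq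
    have hp1 : 1 ≤ p j := by omega
    have hyval : quoVal k y = β - (q j : ℝ)⁻¹ := by
      rw [quoVal, hyp, hyq]
      have hcast : ((p j - 1 : ℕ) : ℝ) = (p j : ℝ) - 1 := by
        push_cast [Nat.cast_sub hp1]; ring
      rw [hcast, ← hqβ, quoVal]
      have hq0 : (q j : ℝ) ≠ 0 := ne_of_gt (hqpos j)
      field_simp
      have hq0' : (baseVal k (List.map Prod.snd (x j)) : ℝ) ≠ 0 := hq0
      simp only [hpdef, hqdef]
      field_simp
    refine ⟨quoVal k y, ⟨hball (Metric.mem_ball.2 ?_), ⟨y, hyL, rfl⟩⟩, ?_⟩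
    · rw [hyval, Real.dist_eq]
      have h0 : (0:ℝ) < (q j : ℝ)⁻¹ := inv_pos.2 (hqpos j)
      rw [show β - (q j : ℝ)⁻¹ - β = -(q j : ℝ)⁻¹ by ring, abs_neg, abs_of_pos h0]
      exact hinv
    · rw [hyval]
      have : (0:ℝ) < (q j : ℝ)⁻¹ := inv_pos.2 (hqpos j)
      linarith
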